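/- Let φ : G → T be a non-degenerate harmonic morphism from a graph G onto a tree T, and fix a vertex x₀ ∈ V(T). Then the pullback divisor D = Σ_{v ∈ V(G), φ(v) = x₀} m_φ(v)·(v) is an effective divisor on G of degree deg(φ) with rank r(D) ≥ 1. In particular, gon(G) ≤ deg(φ), and hence gon(G) ≤ ggon(G). -/

import Mathlib

/-- A finite loopless multigraph: a finite vertex type, a finite edge type,
and an assignment of an unordered pair of distinct endpoints to each edge. -/
structure Multigraph where
  V : Type
  E : Type
  [fintypeV : Fintype V]
  [fintypeE : Fintype E]
  [decEqV : DecidableEq V]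
  ends : E → Sym2 V
  loopless : ∀ e, ¬ (ends e).IsDiag

attribute [instance] Multigraph.fintypeV Multigraph.fintypeE Multigraph.decEqV

namespace Multigraph

/-- The graph obtained by deleting the edges in `W` is connected (finite graphs are
connected iff the vertex set is nonempty and every nonempty proper vertex subset
has an edge leaving it). -/
def ConnectedWithout (G : Multigraph) (W : Set G.E) : Prop :=
  Nonempty G.V ∧
    ∀ A : Finset G.V, A.Nonempty → A ≠ Finset.univ →
      ∃ e, e ∉ W ∧ ∃ u v, G.ends e = s(u, v) ∧ u ∈ A ∧ v ∉ A

/-- `G` is connected. -/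
def Connected (G : Multigraph) : Prop := G.ConnectedWithout ∅

/-- `G` is `k`-edge-connected: deleting any set of at most `k - 1` edges
leaves a connected graph. -/
def EdgeConnected (G : Multigraph) (k : ℕ) : Prop :=
  ∀ W : Finset G.E, W.card < k → G.ConnectedWithout ↑W

/-- An edge is a bridge if deleting it disconnects the graph. -/
def IsBridge (G : Multigraph) (e : G.E) : Prop := ¬ G.ConnectedWithout {e}

/-- The graph obtained by deleting the vertices in `U` (and all incident edges)
is connected. -/
def ConnectedAvoiding (G : Multigraph) (U : Set G.V) : Prop :=
  (∃ v, v ∉ U) ∧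
    ∀ A : Finset G.V, A.Nonempty → (∀ a ∈ A, a ∉ U) → (∃ w, w ∉ U ∧ w ∉ A) →
      ∃ e u v, G.ends e = s(u, v) ∧ u ∈ A ∧ v ∉ A ∧ v ∉ U

/-- `G` is `k`-vertex-connected: deleting any set of at most `k - 1` vertices
leaves a connected graph. -/
def VertexConnected (G : Multigraph) (k : ℕ) : Prop :=
  ∀ U : Finset G.V, U.card < k → G.ConnectedAvoiding ↑U

/-- `G` is simple: no two distinct edges have the same pair of endpoints. -/
def Simple (G : Multigraph) : Prop :=
  ∀ e e' : G.E, G.ends e = G.ends e' → e = e'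

/-- The genus `g(G) = |E| - |V| + 1`. -/
def genus (G : Multigraph) : ℤ :=
  (Fintype.card G.E : ℤ) - (Fintype.card G.V : ℤ) + 1

/-- A tree is a connected graph of genus 0. -/
def IsTree (G : Multigraph) : Prop := G.Connected ∧ G.genus = 0

/-- The number of edges joining `u` and `v`. -/
noncomputable def numEdges (G : Multigraph) (u v : G.V) : ℕ :=
  Set.ncard {e : G.E | G.ends e = s(u, v)}

/-- The valence of a vertex: the number of incident edges. -/
noncomputable def valence (G : Multigraph) (v : G.V) : ℕ :=
  Set.ncard {e : G.E | v ∈ G.ends e}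

/-- A divisor on `G`: an element of the free abelian group on `V(G)`. -/
abbrev Divisor (G : Multigraph) : Type := G.V → ℤ

/-- The degree of a divisor: the sum of its coefficients. -/
def degree (G : Multigraph) (D : G.Divisor) : ℤ := ∑ v, D v

/-- A divisor is effective if all its coefficients are nonnegative. -/
def Effective (G : Multigraph) (D : G.Divisor) : Prop := ∀ v, 0 ≤ D v

/-- The Laplacian of `G` applied to an integer vector `f`. -/
noncomputable def laplacian (G : Multigraph) (f : G.V → ℤ) : G.Divisor :=
  fun v => ∑ w, (G.numEdges v w : ℤ) * (f v - f w)

/-- Linear equivalence of divisors: the difference is in the image of the Laplacian. -/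
def LinEquiv (G : Multigraph) (D D' : G.Divisor) : Prop :=
  ∃ f : G.V → ℤ, D - D' = G.laplacian f

/-- `D - F` is equivalent to an effective divisor for every effective `F` of degree `k`. -/
def RankGe (G : Multigraph) (D : G.Divisor) (k : ℤ) : Prop :=
  ∀ F : G.Divisor, G.Effective F → G.degree F = k →
    ∃ E' : G.Divisor, G.Effective E' ∧ G.LinEquiv (D - F) E'

/-- The Baker–Norine rank of a divisor. -/
noncomputable def rank (G : Multigraph) (D : G.Divisor) : ℤ :=
  sSup {r : ℤ | r = -1 ∨ (0 ≤ r ∧ G.RankGe D r)}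

/-- The (divisorial) gonality of `G`: the minimum degree of an effective divisor
of rank at least 1. -/
noncomputable def gonality (G : Multigraph) : ℕ :=
  sInf {n : ℕ | ∃ D : G.Divisor, G.Effective D ∧ G.degree D = (n : ℤ) ∧ 1 ≤ G.rank D}

end Multigraph

/-- A morphism of multigraphs: vertices map to vertices, and each edge maps either
to an edge joining the images of its endpoints (if they are distinct) or to the
common image of its endpoints. -/
structure Morphism (G G' : Multigraph) where
  vertexMap : G.V → G'.V
  edgeMap : G.E → G'.E ⊕ G'.V
  map_edge_of_eq : ∀ e u v, G.ends e = s(u, v) → vertexMap u = vertexMap v →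
    edgeMap e = Sum.inr (vertexMap u)
  map_edge_of_ne : ∀ e u v, G.ends e = s(u, v) → vertexMap u ≠ vertexMap v →
    ∃ e', edgeMap e = Sum.inl e' ∧ G'.ends e' = s(vertexMap u, vertexMap v)

namespace Morphism

variable {G G' : Multigraph}

/-- The multiplicity `m_φ(v)` of `φ` at `v` with respect to an edge `e'` of `G'`. -/
noncomputable def mult (φ : Morphism G G') (v : G.V) (e' : G'.E) : ℕ :=
  Set.ncard {e : G.E | v ∈ G.ends e ∧ φ.edgeMap e = Sum.inl e'}

/-- `φ` is harmonic if `m_φ(v)` does not depend on the chosen edge `e'`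
incident to `φ(v)`. -/
def Harmonic (φ : Morphism G G') : Prop :=
  ∀ (v : G.V) (e₁ e₂ : G'.E),
    φ.vertexMap v ∈ G'.ends e₁ → φ.vertexMap v ∈ G'.ends e₂ →
      φ.mult v e₁ = φ.mult v e₂

/-- `φ` is non-degenerate if `m_φ(v) > 0` for every vertex `v`. -/
def Nondegenerate (φ : Morphism G G') : Prop :=
  ∀ (v : G.V) (e' : G'.E), φ.vertexMap v ∈ G'.ends e' → 0 < φ.mult v e'

/-- `φ` has degree `d`: every edge of `G'` has exactly `d` preimages. -/
def HasDegree (φ : Morphism G G') (d : ℕ) : Prop :=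
  Nonempty G'.E ∧ ∀ e' : G'.E, Set.ncard {e : G.E | φ.edgeMap e = Sum.inl e'} = d

end Morphism

section Aux

open Finset

namespace Multigraph

variable {G T : Multigraph}

/-- the other endpoint of an edge incident to `v` -/
noncomputable def oth (G : Multigraph) (v : G.V) (e : G.E) : G.V :=
  if h : v ∈ G.ends e then Sym2.Mem.other h else v

lemma ends_eq_oth (G : Multigraph) {v : G.V} {e : G.E} (h : v ∈ G.ends e) :
    G.ends e = s(v, G.oth v e) := by
  rw [oth, dif_pos h, Sym2.other_spec h]

lemma oth_ne (G : Multigraph) {v : G.V} {e : G.E} (h : v ∈ G.ends e) :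
    G.oth v e ≠ v := by
  intro heq
  have := G.loopless e
  rw [G.ends_eq_oth h, heq] at this
  exact this (Sym2.isDiag_iff_proj_eq |>.2 rfl)

lemma ends_eq_iff (G : Multigraph) {v w : G.V} {e : G.E} (h : v ∈ G.ends e) :
    G.ends e = s(v, w) ↔ w = G.oth v e := by
  constructor
  · intro he
    have h2 := G.ends_eq_oth h
    rw [he] at h2
    rcases Sym2.eq_iff.1 h2 with ⟨-, h4⟩ | ⟨h3, rfl⟩
    · exact h4
    · exact (G.oth_ne h h3.symm).elim
  · rintro rfl; exact G.ends_eq_oth h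

lemma numEdges_eq_card (G : Multigraph) (v w : G.V) :
    G.numEdges v w = (Finset.univ.filter (fun e => G.ends e = s(v, w))).card := by
  rw [numEdges, Set.ncard_eq_toFinset_card']
  congr 1
  ext e
  simp

/-- The Laplacian as a sum over incident edges. -/
lemma laplacian_eq_sum_edges (G : Multigraph) (f : G.V → ℤ) (v : G.V) :
    G.laplacian f v = ∑ e, if v ∈ G.ends e then f v - f (G.oth v e) else 0 := by
  rw [laplacian]
  have key : ∀ w, (G.numEdges v w : ℤ) * (f v - f w)
      = ∑ e, if G.ends e = s(v, w) then f v - f w else 0 := by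
    intro w
    rw [numEdges_eq_card, ← Finset.sum_filter, Finset.sum_const, nsmul_eq_mul]
  rw [Finset.sum_congr rfl (fun w _ => key w), Finset.sum_comm]
  refine Finset.sum_congr rfl (fun e _ => ?_)
  by_cases h : v ∈ G.ends e
  · rw [if_pos h]
    have : ∀ w, (if G.ends e = s(v, w) then f v - f w else 0)
        = if w = G.oth v e then f v - f w else 0 := by
      intro w; exact if_congr (G.ends_eq_iff h) rfl rfl
    rw [Finset.sum_congr rfl (fun w _ => this w), Finset.sum_ite_eq' _ _ (fun w => f v - f w),
      if_pos (Finset.mem_univ _)]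
  · rw [if_neg h]
    refine Finset.sum_eq_zero (fun w _ => ?_)
    rw [if_neg]
    intro he
    exact h (by rw [he]; exact Sym2.mem_mk_left _ _)

lemma numEdges_symm (G : Multigraph) (v w : G.V) : G.numEdges v w = G.numEdges w v := by
  unfold numEdges
  congr 1
  ext e
  simp [Sym2.eq_swap]

lemma degree_laplacian (G : Multigraph) (f : G.V → ℤ) : G.degree (G.laplacian f) = 0 := by
  unfold degree laplacian
  have : ∀ v w : G.V, (G.numEdges v w : ℤ) * (f v - f w)
      = ((G.numEdges v w : ℤ) * f v - (G.numEdges w v : ℤ) * f w) := by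
    intro v w; rw [G.numEdges_symm w v]; ring
  calc ∑ v, ∑ w, (G.numEdges v w : ℤ) * (f v - f w)
      = ∑ v, ∑ w, ((G.numEdges v w : ℤ) * f v - (G.numEdges w v : ℤ) * f w) := by
        exact Finset.sum_congr rfl fun v _ => Finset.sum_congr rfl fun w _ => this v w
    _ = (∑ v, ∑ w, (G.numEdges v w : ℤ) * f v) - ∑ v, ∑ w, (G.numEdges w v : ℤ) * f w := by
        rw [← Finset.sum_sub_distrib]
        exact Finset.sum_congr rfl fun v _ => Finset.sum_sub_distrib _ _
    _ = 0 := by rw [Finset.sum_comm (f := fun v w => (G.numEdges w v : ℤ) * f w)]; simp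

lemma degree_sub (G : Multigraph) (D D' : G.Divisor) :
    G.degree (D - D') = G.degree D - G.degree D' := by
  unfold degree
  rw [← Finset.sum_sub_distrib]; rfl

lemma linEquiv_degree {G : Multigraph} {D D' : G.Divisor} (h : G.LinEquiv D D') :
    G.degree D = G.degree D' := by
  obtain ⟨f, hf⟩ := h
  have := G.degree_laplacian f
  rw [← hf, G.degree_sub] at this
  omega

lemma linEquiv_refl (G : Multigraph) (D : G.Divisor) : G.LinEquiv D D := by
  refine ⟨0, ?_⟩
  funext v
  simp [laplacian]

lemma linEquiv_trans {G : Multigraph} {D₁ D₂ D₃ : G.Divisor}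
    (h1 : G.LinEquiv D₁ D₂) (h2 : G.LinEquiv D₂ D₃) : G.LinEquiv D₁ D₃ := by
  obtain ⟨f, hf⟩ := h1
  obtain ⟨g, hg⟩ := h2
  refine ⟨f + g, ?_⟩
  funext v
  have : D₁ - D₃ = (D₁ - D₂) + (D₂ - D₃) := by ring
  rw [this, hf, hg]
  simp only [Pi.add_apply, laplacian, ← Finset.sum_add_distrib]
  exact Finset.sum_congr rfl fun w _ => by ring

end Multigraph

end Aux

section Reach

open Finset

namespace Multigraph

/-- adjacency using only edges in `S` -/
def adjOn (G : Multigraph) (S : Set G.E) (u v : G.V) : Prop :=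
  ∃ e ∈ S, G.ends e = s(u, v)

/-- reachability using only edges in `S` -/
def Reach (G : Multigraph) (S : Set G.E) : G.V → G.V → Prop :=
  Relation.ReflTransGen (G.adjOn S)

lemma adjOn_symm (G : Multigraph) (S : Set G.E) {u v : G.V} (h : G.adjOn S u v) :
    G.adjOn S v u := by
  obtain ⟨e, he, hends⟩ := h
  exact ⟨e, he, hends.trans (Sym2.eq_swap)⟩

lemma reach_symm (G : Multigraph) (S : Set G.E) {u v : G.V} (h : G.Reach S u v) :
    G.Reach S v u := by
  induction h with
  | refl => exact Relation.ReflTransGen.refl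
  | tail _ hbc ih =>
      exact Relation.ReflTransGen.trans
        (Relation.ReflTransGen.single (G.adjOn_symm S hbc)) ih

lemma connectedWithout_reach {G : Multigraph} {W : Set G.E} (h : G.ConnectedWithout W)
    (x z : G.V) : G.Reach Wᶜ x z := by
  classical
  by_contra hz
  set A : Finset G.V := Finset.univ.filter (fun z => G.Reach Wᶜ x z) with hA
  have hxA : x ∈ A := by simp only [hA, Finset.mem_filter, Finset.mem_univ, true_and]; exact Relation.ReflTransGen.refl
  have hne : A ≠ Finset.univ := by
    intro hu
    exact hz (by have : z ∈ A := hu ▸ Finset.mem_univ z; simpa [hA] using this)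
  obtain ⟨e, heW, u, v, hends, huA, hvA⟩ := h.2 A ⟨x, hxA⟩ hne
  have hu : G.Reach Wᶜ x u := by simpa [hA] using huA
  exact hvA (by simp [hA]; exact hu.tail ⟨e, heW, hends⟩)

/-- `z` is reachable from `x` in exactly `n` steps using edges in `S`. -/
def reachN (G : Multigraph) (S : Set G.E) (x : G.V) : ℕ → G.V → Prop
  | 0, z => z = x
  | n + 1, z => ∃ u, G.reachN S x n u ∧ G.adjOn S u z

lemma reach_exists_reachN {G : Multigraph} {S : Set G.E} {x z : G.V}
    (h : G.Reach S x z) : ∃ n, G.reachN S x n z := by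
  induction h with
  | refl => exact ⟨0, rfl⟩
  | tail _ hbc ih =>
      obtain ⟨n, hn⟩ := ih
      exact ⟨n + 1, _, hn, hbc⟩

lemma card_le_of_reach (G : Multigraph) (S : Finset G.E) (x : G.V) (e₀ : G.E)
    (hall : ∀ z, G.Reach ↑S x z) : Fintype.card G.V ≤ S.card + 1 := by
  classical
  have hex : ∀ z, ∃ n, G.reachN ↑S x n z := fun z => reach_exists_reachN (hall z)
  set dist : G.V → ℕ := fun z => Nat.find (hex z) with hdistdef
  have hdist : ∀ z, G.reachN ↑S x (dist z) z := fun z => Nat.find_spec (hex z)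
  have key : ∀ z, z ≠ x → ∃ e, e ∈ S ∧ ∃ u, G.ends e = s(u, z) ∧ dist u < dist z := by
    intro z hz
    have h0 : dist z ≠ 0 := by
      intro h
      have := hdist z
      rw [h] at this
      exact hz this
    obtain ⟨k, hk⟩ : ∃ k, dist z = k + 1 := ⟨dist z - 1, by omega⟩
    have h1 := hdist z
    rw [hk] at h1
    obtain ⟨u, hu, e, he, hends⟩ := h1
    refine ⟨e, he, u, hends, ?_⟩
    have : dist u ≤ k := Nat.find_le hu
    omega
  set ε : G.V → G.E := fun z =>
    if h : ∃ e, e ∈ S ∧ ∃ u, G.ends e = s(u, z) ∧ dist u < dist z then h.choose else e₀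
    with hε
  have hspec : ∀ z, z ≠ x → ε z ∈ S ∧ ∃ u, G.ends (ε z) = s(u, z) ∧ dist u < dist z := by
    intro z hz
    have h := key z hz
    simp only [hε, dif_pos h]
    exact h.choose_spec
  have hmaps : ∀ z ∈ Finset.univ.erase x, ε z ∈ S := by
    intro z hzz
    exact (hspec z (Finset.mem_erase.1 hzz).1).1
  have hinj : Set.InjOn ε ↑(Finset.univ.erase x) := by
    intro z hz w hw hzw
    by_contra hne
    obtain ⟨u, hu, hdu⟩ := (hspec z (by simpa using hz)).2
    obtain ⟨u', hu', hdu'⟩ := (hspec w (by simpa using hw)).2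
    rw [hzw, hu'] at hu
    rcases Sym2.eq_iff.1 hu with ⟨rfl, rfl⟩ | ⟨h1, h2⟩
    · exact hne rfl
    · subst h1; subst h2; omega
  have hcard := Finset.card_le_card_of_injOn ε hmaps hinj
  rw [Finset.card_erase_of_mem (Finset.mem_univ x), Finset.card_univ] at hcard
  have : 1 ≤ Fintype.card G.V := Fintype.card_pos_iff.2 ⟨x⟩
  omega

lemma sym2_exists {α : Type*} (z : Sym2 α) : ∃ a b, z = s(a, b) := by
  induction z using Sym2.inductionOn with
  | _ a b => exact ⟨a, b, rfl⟩

lemma card_V_ge_two {G : Multigraph} (e : G.E) : 2 ≤ Fintype.card G.V := by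
  obtain ⟨a, b, hab⟩ := sym2_exists (G.ends e)
  have hne : a ≠ b := by
    intro h
    exact G.loopless e (by rw [hab, h]; exact Sym2.mk_isDiag_iff.2 rfl)
  exact Fintype.one_lt_card_iff.2 ⟨a, b, hne⟩

lemma exists_incident {G : Multigraph} (hC : G.Connected) (e₀ : G.E) (t : G.V) :
    ∃ e, t ∈ G.ends e := by
  have hne : ({t} : Finset G.V) ≠ Finset.univ := by
    intro h
    have := card_V_ge_two e₀
    rw [← Finset.card_univ, ← h, Finset.card_singleton] at this
    omega
  obtain ⟨e, -, u, v, hends, huA, -⟩ := hC.2 {t} ⟨t, Finset.mem_singleton_self t⟩ hne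
  have : u = t := Finset.mem_singleton.1 huA
  subst this
  exact ⟨e, by rw [hends]; exact Sym2.mem_mk_left _ _⟩

/-- In a tree, removing an edge disconnects its endpoints. -/
lemma tree_not_reach {T : Multigraph} (hT : T.IsTree) {e' : T.E} {x y : T.V}
    (h : T.ends e' = s(x, y)) : ¬ T.Reach {e'}ᶜ x y := by
  classical
  intro hreach
  have hall : ∀ z, T.Reach Set.univ x z := by
    intro z
    have := connectedWithout_reach hT.1 x z
    simpa using this
  have hall' : ∀ z, T.Reach {e'}ᶜ x z := by
    intro z
    have hz := hall z
    induction hz with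
    | refl => exact Relation.ReflTransGen.refl
    | tail _ hbc ih =>
        obtain ⟨e, -, hends⟩ := hbc
        by_cases he : e = e'
        · subst he
          rw [h] at hends
          rcases Sym2.eq_iff.1 hends.symm with ⟨rfl, rfl⟩ | ⟨rfl, rfl⟩
          · exact hreach
          · exact Relation.ReflTransGen.refl
        · exact ih.tail ⟨e, by simp [he], hends⟩
  have hall'' : ∀ z, T.Reach ↑(Finset.univ.erase e') x z := by
    intro z
    have : ((Finset.univ.erase e' : Finset T.E) : Set T.E) = {e'}ᶜ := by
      ext e; simp
    rw [this]
    exact hall' z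
  have hcard := card_le_of_reach T (Finset.univ.erase e') x e' hall''
  rw [Finset.card_erase_of_mem (Finset.mem_univ e'), Finset.card_univ] at hcard
  have hg : (Fintype.card T.E : ℤ) - (Fintype.card T.V : ℤ) + 1 = 0 := hT.2
  have h1 : 1 ≤ Fintype.card T.E := Fintype.card_pos_iff.2 ⟨e'⟩
  omega

end Multigraph

end Reach

section Morph

open Finset
open scoped Classical

variable {G T : Multigraph}

lemma ncard_eq_card_filter {α : Type*} [Fintype α] (p : α → Prop) [DecidablePred p] :
    Set.ncard {x | p x} = (Finset.univ.filter p).card := by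
  rw [Set.ncard_eq_toFinset_card']
  congr 1
  ext x
  simp

lemma Morphism.edge_facts (φ : Morphism G T) {e : G.E} {e' : T.E}
    (h : φ.edgeMap e = Sum.inl e') {u w : G.V} (hends : G.ends e = s(u, w)) :
    φ.vertexMap u ≠ φ.vertexMap w ∧ T.ends e' = s(φ.vertexMap u, φ.vertexMap w) := by
  by_cases heq : φ.vertexMap u = φ.vertexMap w
  · have := φ.map_edge_of_eq e u w hends heq
    rw [h] at this
    exact absurd this (by simp)
  · obtain ⟨e'', h1, h2⟩ := φ.map_edge_of_ne e u w hends heq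
    rw [h] at h1
    obtain rfl : e' = e'' := by injection h1
    exact ⟨heq, h2⟩

lemma Morphism.mult_eq_card (φ : Morphism G T) (v : G.V) (e' : T.E) :
    φ.mult v e'
      = (Finset.univ.filter (fun e => v ∈ G.ends e ∧ φ.edgeMap e = Sum.inl e')).card := by
  rw [Morphism.mult, ncard_eq_card_filter]

lemma Morphism.endpoint_unique (φ : Morphism G T) {e : G.E} {e' : T.E}
    (h : φ.edgeMap e = Sum.inl e') {x : T.V} (hx : x ∈ T.ends e') :
    (Finset.univ.filter (fun v => v ∈ G.ends e ∧ φ.vertexMap v = x)).card = 1 := by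
  obtain ⟨u, w, hends⟩ := Multigraph.sym2_exists (G.ends e)
  have huw : u ≠ w := fun h' => G.loopless e (by rw [hends, h']; exact Sym2.mk_isDiag_iff.2 rfl)
  obtain ⟨hne, hends'⟩ := φ.edge_facts h hends
  rw [hends'] at hx
  rw [Finset.card_eq_one]
  rcases Sym2.mem_iff.1 hx with hxu | hxw
  · refine ⟨u, ?_⟩
    ext v
    simp only [Finset.mem_filter, Finset.mem_univ, true_and, Finset.mem_singleton, hends,
      Sym2.mem_iff]
    constructor
    · rintro ⟨hv | hv, hφ⟩
      · exact hv
      · subst hv; exact absurd (hφ.trans hxu).symm hne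
    · rintro rfl; exact ⟨Or.inl rfl, hxu.symm⟩
  · refine ⟨w, ?_⟩
    ext v
    simp only [Finset.mem_filter, Finset.mem_univ, true_and, Finset.mem_singleton, hends,
      Sym2.mem_iff]
    constructor
    · rintro ⟨hv | hv, hφ⟩
      · subst hv; exact absurd (hφ.trans hxw) hne
      · exact hv
    · rintro rfl; exact ⟨Or.inr rfl, hxw.symm⟩

lemma Morphism.sum_mult (φ : Morphism G T) {e' : T.E} {x : T.V} (hx : x ∈ T.ends e') :
    ∑ v, (if φ.vertexMap v = x then φ.mult v e' else 0)
      = Set.ncard {e | φ.edgeMap e = Sum.inl e'} := by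
  have step1 : ∀ v, (if φ.vertexMap v = x then φ.mult v e' else 0)
      = ∑ e, (if (v ∈ G.ends e ∧ φ.edgeMap e = Sum.inl e') ∧ φ.vertexMap v = x
          then 1 else 0) := by
    intro v
    by_cases hφ : φ.vertexMap v = x
    · rw [if_pos hφ, φ.mult_eq_card, Finset.card_filter]
      exact Finset.sum_congr rfl fun e _ => if_congr (by simp [hφ]) rfl rfl
    · rw [if_neg hφ]
      exact (Finset.sum_eq_zero fun e _ => if_neg (fun hh => hφ hh.2)).symm
  rw [Finset.sum_congr rfl (fun v _ => step1 v), Finset.sum_comm]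
  have step2 : ∀ e, (∑ v, if (v ∈ G.ends e ∧ φ.edgeMap e = Sum.inl e') ∧ φ.vertexMap v = x
      then 1 else 0) = if φ.edgeMap e = Sum.inl e' then 1 else 0 := by
    intro e
    by_cases he : φ.edgeMap e = Sum.inl e'
    · rw [if_pos he]
      have h1 : (∑ v, if (v ∈ G.ends e ∧ φ.edgeMap e = Sum.inl e') ∧ φ.vertexMap v = x
          then 1 else 0)
          = (Finset.univ.filter (fun v => v ∈ G.ends e ∧ φ.vertexMap v = x)).card := by
        rw [Finset.card_filter]
        refine Finset.sum_congr rfl fun v _ => if_congr ?_ rfl rfl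
        constructor
        · rintro ⟨⟨a, -⟩, b⟩; exact ⟨a, b⟩
        · rintro ⟨a, b⟩; exact ⟨⟨a, he⟩, b⟩
      rw [h1, φ.endpoint_unique he hx]
    · rw [if_neg he]
      exact Finset.sum_eq_zero fun v _ => if_neg (fun hh => he hh.1.2)
  rw [Finset.sum_congr rfl (fun e _ => step2 e), ncard_eq_card_filter, Finset.card_filter]

/-- Pullback divisors along adjacent tree vertices are linearly equivalent. -/
lemma Morphism.linEquiv_pullback (φ : Morphism G T) (hT : T.IsTree) (m : G.V → ℕ)
    (hm : ∀ (v : G.V) (e' : T.E), φ.vertexMap v ∈ T.ends e' → φ.mult v e' = m v)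
    {e' : T.E} {x y : T.V} (h : T.ends e' = s(x, y)) :
    G.LinEquiv (fun v => if φ.vertexMap v = x then (m v : ℤ) else 0)
               (fun v => if φ.vertexMap v = y then (m v : ℤ) else 0) := by
  have hxy : x ≠ y := fun h' => T.loopless e' (by rw [h, h']; exact Sym2.mk_isDiag_iff.2 rfl)
  set f : G.V → ℤ := fun v => if T.Reach {e'}ᶜ x (φ.vertexMap v) then 1 else 0 with hf
  have hfx : ∀ u, φ.vertexMap u = x → f u = 1 := by
    intro u hu
    simp only [hf]
    rw [hu, if_pos (show T.Reach {e'}ᶜ x x from Relation.ReflTransGen.refl)]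
  have hfy : ∀ u, φ.vertexMap u = y → f u = 0 := by
    intro u hu
    simp only [hf]
    rw [hu, if_neg (Multigraph.tree_not_reach hT h)]
  have cross : ∀ (e'' : T.E), e'' ≠ e' → ∀ a b : T.V, T.ends e'' = s(a, b) →
      (T.Reach {e'}ᶜ x a ↔ T.Reach {e'}ᶜ x b) := by
    intro e'' hne a b hends
    have hadj : T.adjOn {e'}ᶜ a b := ⟨e'', by simp [hne], hends⟩
    exact ⟨fun hr => hr.tail hadj, fun hr => hr.tail (T.adjOn_symm _ hadj)⟩
  refine ⟨f, ?_⟩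
  funext v
  rw [Pi.sub_apply, Multigraph.laplacian_eq_sum_edges]
  set c : ℤ := (if φ.vertexMap v = x then (1 : ℤ) else 0)
      - (if φ.vertexMap v = y then (1 : ℤ) else 0) with hc
  have perEdge : ∀ e : G.E, (if v ∈ G.ends e then f v - f (G.oth v e) else 0)
      = if (v ∈ G.ends e ∧ φ.edgeMap e = Sum.inl e') then c else 0 := by
    intro e
    by_cases hv : v ∈ G.ends e
    · have hends : G.ends e = s(v, G.oth v e) := G.ends_eq_oth hv
      set w := G.oth v e with hw
      by_cases hφ : φ.vertexMap v = φ.vertexMap w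
      · have hmap := φ.map_edge_of_eq e v w hends hφ
        rw [if_pos hv, if_neg (by rw [hmap]; simp)]
        have : f v = f w := by simp only [hf]; rw [hφ]
        rw [this, sub_self]
      · obtain ⟨e'', h1, h2⟩ := φ.map_edge_of_ne e v w hends hφ
        by_cases hee : e'' = e'
        · subst hee
          rw [if_pos hv, if_pos ⟨hv, h1⟩]
          rw [h] at h2
          rcases Sym2.eq_iff.1 h2 with ⟨hvx, hwy⟩ | ⟨hvy, hwx⟩
          · rw [hfx v hvx.symm, hfy w hwy.symm, hc, if_pos hvx.symm,
              if_neg (fun hh => hxy (hvx.trans hh))]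
          · rw [hfy v hwx.symm, hfx w hvy.symm, hc,
              if_neg (fun hh => hxy (hh.symm.trans hwx.symm)), if_pos hwx.symm]
        · have hno : ¬ (v ∈ G.ends e ∧ φ.edgeMap e = Sum.inl e') := by
            rintro ⟨-, hbad⟩
            rw [h1] at hbad
            injection hbad with hb
            exact hee hb
          rw [if_pos hv, if_neg hno]
          have hiff := cross e'' hee _ _ h2
          have : f v = f w := by
            simp only [hf]
            by_cases hr : T.Reach {e'}ᶜ x (φ.vertexMap v)
            · rw [if_pos hr, if_pos (hiff.1 hr)]
            · rw [if_neg hr, if_neg (fun hr' => hr (hiff.2 hr'))]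
          rw [this, sub_self]
    · rw [if_neg hv, if_neg (fun hh => hv hh.1)]
  rw [Finset.sum_congr rfl (fun e _ => perEdge e), ← Finset.sum_filter, Finset.sum_const,
    nsmul_eq_mul, ← φ.mult_eq_card]
  have hmem_x : x ∈ T.ends e' := by rw [h]; exact Sym2.mem_mk_left _ _
  have hmem_y : y ∈ T.ends e' := by rw [h]; exact Sym2.mem_mk_right _ _
  by_cases hvx : φ.vertexMap v = x
  · rw [if_pos hvx, if_neg (by rw [hvx]; exact hxy), hm v e' (by rw [hvx]; exact hmem_x), hc,
      if_pos hvx, if_neg (by rw [hvx]; exact hxy)]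
    ring
  · by_cases hvy : φ.vertexMap v = y
    · rw [if_neg hvx, if_pos hvy, hm v e' (by rw [hvy]; exact hmem_y), hc, if_neg hvx,
        if_pos hvy]
      ring
    · have hmult : φ.mult v e' = 0 := by
        rw [φ.mult_eq_card, Finset.card_eq_zero]
        ext e
        simp only [Finset.mem_filter, Finset.mem_univ, true_and, Finset.notMem_empty,
          iff_false]
        rintro ⟨hv, he⟩
        obtain ⟨-, h2⟩ := φ.edge_facts he (G.ends_eq_oth hv)
        rw [h] at h2
        rcases Sym2.eq_iff.1 h2 with ⟨hx1, -⟩ | ⟨-, hy1⟩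
        · exact hvx hx1.symm
        · exact hvy hy1.symm
      rw [if_neg hvx, if_neg hvy, hmult, hc, if_neg hvx, if_neg hvy]
      ring

/-- Pullback divisors at any two tree vertices are linearly equivalent. -/
lemma Morphism.linEquiv_pullback_all (φ : Morphism G T) (hT : T.IsTree) (m : G.V → ℕ)
    (hm : ∀ (v : G.V) (e' : T.E), φ.vertexMap v ∈ T.ends e' → φ.mult v e' = m v)
    (x y : T.V) :
    G.LinEquiv (fun v => if φ.vertexMap v = x then (m v : ℤ) else 0)
               (fun v => if φ.vertexMap v = y then (m v : ℤ) else 0) := by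
  set Dx : T.V → G.Divisor := fun z v => if φ.vertexMap v = z then (m v : ℤ) else 0 with hDx
  show G.LinEquiv (Dx x) (Dx y)
  set A : Finset T.V := Finset.univ.filter (fun z => G.LinEquiv (Dx x) (Dx z)) with hA
  have hxA : x ∈ A := by
    simp only [hA, Finset.mem_filter, Finset.mem_univ, true_and]
    exact G.linEquiv_refl _
  by_contra hy
  have hyA : y ∉ A := by
    simp only [hA, Finset.mem_filter, Finset.mem_univ, true_and]
    exact hy
  have hne : A ≠ Finset.univ := fun h => hyA (h ▸ Finset.mem_univ y)
  obtain ⟨e, -, u, w, hends, huA, hwA⟩ := hT.1.2 A ⟨x, hxA⟩ hne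
  have hu : G.LinEquiv (Dx x) (Dx u) := by
    have := huA
    simp only [hA, Finset.mem_filter, Finset.mem_univ, true_and] at this
    exact this
  have huw : G.LinEquiv (Dx u) (Dx w) := φ.linEquiv_pullback hT m hm hends
  exact hwA (by
    simp only [hA, Finset.mem_filter, Finset.mem_univ, true_and]
    exact Multigraph.linEquiv_trans hu huw)

end Morph


/-- Let `φ : G → T` be a non-degenerate harmonic morphism of
degree `d` onto a tree `T` (with common multiplicities `m v = m_φ(v)`), and fix
`x₀ ∈ V(T)`. Then the pullback divisor `D = Σ_{φ(v) = x₀} m_φ(v)·(v)` is effective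
of degree `d = deg(φ)` and has rank at least 1. In particular `gon(G) ≤ deg(φ)`,
and hence `gon(G) ≤ ggon(G)`. -/
theorem stmt_18 (G T : Multigraph) (hG : G.Connected) (hT : T.IsTree)
    (φ : Morphism G T) (hharm : φ.Harmonic) (hnd : φ.Nondegenerate)
    (d : ℕ) (hdeg : φ.HasDegree d)
    (m : G.V → ℕ)
    (hm : ∀ (v : G.V) (e' : T.E), φ.vertexMap v ∈ T.ends e' → φ.mult v e' = m v)
    (x₀ : T.V)
    (D : G.Divisor)
    (hD : D = fun v => if φ.vertexMap v = x₀ then (m v : ℤ) else 0) :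
    G.Effective D ∧ G.degree D = (d : ℤ) ∧ 1 ≤ G.rank D ∧ G.gonality ≤ d := by
  classical
  obtain ⟨e₀⟩ := hdeg.1
  -- multiplicities are positive
  have hm1 : ∀ v, 1 ≤ m v := by
    intro v
    obtain ⟨e, he⟩ := Multigraph.exists_incident hT.1 e₀ (φ.vertexMap v)
    have := hnd v e he
    rw [hm v e he] at this
    omega
  -- effectivity
  have heff : G.Effective D := by
    intro v
    rw [hD]
    dsimp only
    split <;> simp
  -- degree
  have hdegD : G.degree D = (d : ℤ) := by
    obtain ⟨ex, hex⟩ := Multigraph.exists_incident hT.1 e₀ x₀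
    have hsum := φ.sum_mult hex
    rw [hdeg.2 ex] at hsum
    rw [hD, Multigraph.degree, ← hsum]
    push_cast
    refine Finset.sum_congr rfl fun v _ => ?_
    by_cases hv : φ.vertexMap v = x₀
    · rw [if_pos hv, if_pos hv, hm v ex (by rw [hv]; exact hex)]
    · rw [if_neg hv, if_neg hv]
  -- rank ≥ 1, via RankGe D 1
  have hrge : G.RankGe D 1 := by
    intro F hF hdegF
    -- F is the indicator of a single vertex
    obtain ⟨v₀, hv₀⟩ : ∃ v₀, 0 < F v₀ := by
      by_contra hc
      push_neg at hc
      have : G.degree F ≤ 0 := Finset.sum_nonpos (fun v _ => hc v)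
      omega
    have hsum : F v₀ + ∑ w ∈ Finset.univ.erase v₀, F w = 1 := by
      rw [Finset.add_sum_erase _ F (Finset.mem_univ v₀)]
      exact hdegF
    have hnn : 0 ≤ ∑ w ∈ Finset.univ.erase v₀, F w :=
      Finset.sum_nonneg (fun w _ => hF w)
    have hFv₀ : F v₀ = 1 := by omega
    have hFzero : ∀ w, w ≠ v₀ → F w = 0 := by
      have h0 : ∑ w ∈ Finset.univ.erase v₀, F w = 0 := by omega
      intro w hw
      have := (Finset.sum_eq_zero_iff_of_nonneg (fun w _ => hF w)).1 h0 w
        (Finset.mem_erase.2 ⟨hw, Finset.mem_univ w⟩)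
      exact this
    set D₁ : G.Divisor := fun v => if φ.vertexMap v = φ.vertexMap v₀ then (m v : ℤ) else 0
      with hD₁
    refine ⟨D₁ - F, ?_, ?_⟩
    · intro v
      simp only [hD₁, Pi.sub_apply]
      by_cases hv : v = v₀
      · subst hv
        rw [if_pos rfl, hFv₀]
        have := hm1 v
        omega
      · rw [hFzero v hv]
        split <;> simp
    · obtain ⟨f, hf⟩ := φ.linEquiv_pullback_all hT m hm x₀ (φ.vertexMap v₀)
      refine ⟨f, ?_⟩
      rw [← hf, hD]
      funext v
      simp only [Pi.sub_apply, hD₁]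
      ring
  -- rank ≥ 1
  have hVne : Nonempty G.V := hG.1
  have hbdd : ∀ r ∈ {r : ℤ | r = -1 ∨ (0 ≤ r ∧ G.RankGe D r)}, r ≤ (d : ℤ) := by
    rintro r (rfl | ⟨hr0, hrge'⟩)
    · omega
    · obtain ⟨v₁⟩ := hVne
      set F : G.Divisor := fun v => if v = v₁ then r else 0 with hF
      have hFeff : G.Effective F := by
        intro v
        simp only [hF]
        split <;> omega
      have hFdeg : G.degree F = r := by
        simp only [Multigraph.degree, hF, Finset.sum_ite_eq' Finset.univ v₁ (fun _ => r),
          if_pos (Finset.mem_univ v₁)]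
      obtain ⟨E', hE'eff, hE'equiv⟩ := hrge' F hFeff hFdeg
      have hdE' : 0 ≤ G.degree E' := Finset.sum_nonneg (fun v _ => hE'eff v)
      have := Multigraph.linEquiv_degree hE'equiv
      rw [G.degree_sub, hdegD, hFdeg] at this
      omega
  have hrank : 1 ≤ G.rank D := by
    refine le_csSup ⟨(d : ℤ), fun r hr => hbdd r hr⟩ ?_
    exact Or.inr ⟨by norm_num, hrge⟩
  refine ⟨heff, hdegD, hrank, ?_⟩
  exact Nat.sInf_le ⟨D, heff, hdegD, hrank⟩
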